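/- Let (X,r) be a left non-degenerate set-theoretic solution of the Yang–Baxter equation and define σ_z(x) = λ_z(ρ_{λ_x^{-1}(z)}(x)) for x,z ∈ X. Then λ_x ∘ σ_y = σ_{λ_x(y)} ∘ λ_x for all x,y ∈ X. -/
import Mathlib

/-- The map `σ_z` of a left non-degenerate solution:
`σ_z(x) = λ_z(ρ_{λ_x⁻¹(z)}(x))`. -/
def sigmaMap {X : Type*} (lam : X → Equiv.Perm X) (rho : X → X → X) (z x : X) : X :=
  lam z (rho ((lam x).symm z) x)

theorem stmt1 {X : Type*} (lam : X → Equiv.Perm X) (rho : X → X → X)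
    (hYB1 : ∀ x y z : X, lam x (lam y z) = lam (lam x y) (lam (rho y x) z))
    (hYB2 : ∀ x y z : X,
      lam (rho (lam y z) x) (rho z y) = rho (lam (rho y x) z) (lam x y))
    (hYB3 : ∀ x y z : X, rho z (rho y x) = rho (rho z y) (rho (lam y z) x)) :
    ∀ x y z : X,
      lam x (sigmaMap lam rho y z) = sigmaMap lam rho (lam x y) (lam x z) := by
  intro x y z
  set w := (lam z).symm y with hw
  have hy : lam z w = y := (lam z).apply_symm_apply y
  have hinv : (lam (lam x z)).symm (lam x y) = lam (rho z x) w := by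
    apply (lam (lam x z)).injective
    rw [(lam (lam x z)).apply_symm_apply, ← hYB1, hy]
  simp only [sigmaMap, ← hw, hinv]
  rw [← hy, hYB1 x (lam z w) (rho w z), hYB2 x z w]
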